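/- Let x_1, …, x_n ∈ ℝ^m with n ≥ m and x_1 + ⋯ + x_n = 0. Then there exists a chain of subsets A_m ⊆ A_{m+1} ⊆ ⋯ ⊆ A_n = {1, …, n} with |A_k| = k for each k ∈ {m, …, n}, such that for every k ∈ {m, …, n} there exist real numbers λ_i ∈ [0,1] for i ∈ A_k with ∑_{i ∈ A_k} λ_i x_i = 0 and ∑_{i ∈ A_k} λ_i = k − m. -/

import Mathlib

open Finset

namespace SteinitzChainAux

variable {m n : ℕ}

def Feas (x : Fin n → Fin m → ℝ) (A : Finset (Fin n)) (c : ℝ) (μ : Fin n → ℝ) : Prop :=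
  (∀ i ∈ A, 0 ≤ μ i ∧ μ i ≤ 1) ∧ (∑ i ∈ A, μ i • x i) = 0 ∧ (∑ i ∈ A, μ i) = c

noncomputable def Fr (A : Finset (Fin n)) (μ : Fin n → ℝ) : Finset (Fin n) :=
  A.filter (fun i => 0 < μ i ∧ μ i < 1)

lemma mem_Fr {A : Finset (Fin n)} {μ : Fin n → ℝ} {i : Fin n} :
    i ∈ Fr A μ ↔ i ∈ A ∧ 0 < μ i ∧ μ i < 1 := by
  simp [Fr]

lemma Fr_subset {A : Finset (Fin n)} {μ : Fin n → ℝ} : Fr A μ ⊆ A :=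
  filter_subset _ _

lemma reduce_frac (x : Fin n → Fin m → ℝ) (A : Finset (Fin n)) (c : ℝ) (μ : Fin n → ℝ)
    (hμ : Feas x A c μ) (hF : m + 1 < (Fr A μ).card) :
    ∃ ν, Feas x A c ν ∧ (Fr A ν).card < (Fr A μ).card := by
  classical
  obtain ⟨hbox, hvec, hsum⟩ := hμ
  set F := Fr A μ with hFdef
  have hFA : F ⊆ A := Fr_subset
  -- linear dependence of the vectors (x i, 1), i ∈ F
  have hdep : ¬ LinearIndependent ℝ
      (fun i : {i // i ∈ F} => ((x i.1, (1:ℝ)) : (Fin m → ℝ) × ℝ)) := by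
    intro h
    have hcard := h.fintype_card_le_finrank
    rw [Fintype.card_coe] at hcard
    have hrk : Module.finrank ℝ ((Fin m → ℝ) × ℝ) = m + 1 := by
      simp [Module.finrank_prod]
    omega
  obtain ⟨g, hg0, ig, hig⟩ := Fintype.not_linearIndependent_iff.mp hdep
  -- the direction of perturbation
  set d : Fin n → ℝ := fun i => if h : i ∈ F then g ⟨i, h⟩ else 0 with hd
  have hdF : ∀ i, i ∉ F → d i = 0 := by
    intro i hi; simp [hd, hi]
  have hdval : ∀ i : {i // i ∈ F}, d i.1 = g i := by
    intro i; simp [hd, i.2]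
  have hg0' : ∑ i ∈ F.attach, (g i • ((x i.1, (1:ℝ)) : (Fin m → ℝ) × ℝ)) = 0 := by
    rw [← Finset.univ_eq_attach]; exact hg0
  have hdvec : ∑ i ∈ F, d i • x i = 0 := by
    have h1 := congrArg Prod.fst hg0'
    rw [Prod.fst_sum] at h1
    simp only [Prod.smul_fst] at h1
    calc ∑ i ∈ F, d i • x i = ∑ i ∈ F.attach, d i.1 • x i.1 := (Finset.sum_attach _ _).symm
    _ = ∑ i ∈ F.attach, g i • x i.1 := by
        refine Finset.sum_congr rfl fun i _ => by rw [hdval]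
    _ = 0 := h1
  have hdsum : ∑ i ∈ F, d i = 0 := by
    have h1 := congrArg Prod.snd hg0'
    rw [Prod.snd_sum] at h1
    simp only [Prod.smul_snd, smul_eq_mul, mul_one] at h1
    calc ∑ i ∈ F, d i = ∑ i ∈ F.attach, d i.1 := (Finset.sum_attach _ _).symm
    _ = ∑ i ∈ F.attach, g i := by
        refine Finset.sum_congr rfl fun i _ => by rw [hdval]
    _ = 0 := h1
  have hdvecA : ∑ i ∈ A, d i • x i = 0 := by
    rw [← Finset.sum_subset hFA (fun i _ hi => by rw [hdF i hi, zero_smul])]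
    exact hdvec
  have hdsumA : ∑ i ∈ A, d i = 0 := by
    rw [← Finset.sum_subset hFA (fun i _ hi => hdF i hi)]
    exact hdsum
  -- the maximal step size
  set F' : Finset (Fin n) := F.filter (fun i => d i ≠ 0) with hF'
  have hF'ne : F'.Nonempty := ⟨ig.1, by
    simp only [hF', Finset.mem_filter]
    exact ⟨ig.2, by rw [hdval]; exact hig⟩⟩
  set bnd : Fin n → ℝ := fun i => (if 0 < d i then 1 - μ i else -μ i) / d i with hbnd
  set t : ℝ := F'.inf' hF'ne bnd with ht
  have hmemF' : ∀ i ∈ F', (0 < μ i ∧ μ i < 1) ∧ d i ≠ 0 := by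
    intro i hi
    rw [hF', Finset.mem_filter] at hi
    exact ⟨(mem_Fr.mp hi.1).2, hi.2⟩
  have htpos : 0 < t := by
    rw [ht, Finset.lt_inf'_iff]
    intro i hi
    obtain ⟨⟨h0, h1⟩, hd0⟩ := hmemF' i hi
    rcases lt_or_gt_of_ne hd0 with hneg | hpos
    · rw [hbnd]; simp only [if_neg (not_lt.mpr hneg.le)]
      exact div_pos_of_neg_of_neg (by linarith) hneg
    · rw [hbnd]; simp only [if_pos hpos]
      exact div_pos (by linarith) hpos
  have htle : ∀ i ∈ F', t ≤ bnd i := fun i hi => Finset.inf'_le _ hi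
  set ν : Fin n → ℝ := fun i => μ i + t * d i with hν
  have hν_eq : ∀ i, d i = 0 → ν i = μ i := by
    intro i hi; simp [hν, hi]
  have hν_box : ∀ i ∈ A, 0 ≤ ν i ∧ ν i ≤ 1 := by
    intro i hiA
    by_cases hd0 : d i = 0
    · rw [hν_eq i hd0]; exact hbox i hiA
    · have hiF : i ∈ F := by
        by_contra hiF; exact hd0 (hdF i hiF)
      have hiF' : i ∈ F' := by rw [hF', Finset.mem_filter]; exact ⟨hiF, hd0⟩
      obtain ⟨h0, h1⟩ := (mem_Fr.mp hiF).2
      have hb := htle i hiF'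
      rcases lt_or_gt_of_ne hd0 with hneg | hpos
      · rw [hbnd] at hb; simp only [if_neg (not_lt.mpr hneg.le)] at hb
        have h2 : -μ i ≤ t * d i := by
          have := (le_div_iff_of_neg hneg).mp hb
          linarith
        have h3 : t * d i ≤ 0 := mul_nonpos_of_nonneg_of_nonpos htpos.le hneg.le
        constructor <;> simp only [hν] <;> linarith
      · rw [hbnd] at hb; simp only [if_pos hpos] at hb
        have h2 : t * d i ≤ 1 - μ i := by
          have := (le_div_iff₀ hpos).mp hb
          linarith
        have h3 : 0 ≤ t * d i := mul_nonneg htpos.le hpos.le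
        constructor <;> simp only [hν] <;> linarith
  have hν_vec : ∑ i ∈ A, ν i • x i = 0 := by
    simp only [hν, add_smul, Finset.sum_add_distrib, hvec, mul_smul, ← Finset.smul_sum,
      hdvecA, smul_zero, add_zero]
  have hν_sum : ∑ i ∈ A, ν i = c := by
    simp only [hν, Finset.sum_add_distrib, hsum, ← Finset.mul_sum, hdsumA, mul_zero, add_zero]
  -- the witness where the bound is attained leaves the fractional set
  obtain ⟨i₀, hi₀F', hi₀eq⟩ := Finset.exists_mem_eq_inf' hF'ne bnd
  obtain ⟨⟨h00, h01⟩, hd0⟩ := hmemF' i₀ hi₀F'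
  have hi₀F : i₀ ∈ F := (Finset.mem_filter.mp hi₀F').1
  have hν_i₀ : ν i₀ = if 0 < d i₀ then 1 else 0 := by
    have hb : t = bnd i₀ := hi₀eq
    simp only [hν, hb, hbnd]
    rw [div_mul_cancel₀ _ hd0]
    split <;> ring
  have hi₀_not : i₀ ∉ Fr A ν := by
    rw [mem_Fr]
    rintro ⟨-, hl, hr⟩
    rw [hν_i₀] at hl hr
    split at hl <;> split at hr <;> linarith
  have hsub : Fr A ν ⊆ F := by
    intro i hi
    rw [mem_Fr] at hi
    obtain ⟨hiA, hl, hr⟩ := hi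
    by_cases hd0 : d i = 0
    · rw [hν_eq i hd0] at hl hr
      rw [hFdef, mem_Fr]; exact ⟨hiA, hl, hr⟩
    · by_contra hiF; exact hd0 (hdF i hiF)
  refine ⟨ν, ⟨hν_box, hν_vec, hν_sum⟩, ?_⟩
  exact Finset.card_lt_card (Finset.ssubset_iff_of_subset hsub |>.mpr ⟨i₀, hi₀F, hi₀_not⟩)
lemma exists_basic (x : Fin n → Fin m → ℝ) (A : Finset (Fin n)) (c : ℝ)
    (h : ∃ μ, Feas x A c μ) : ∃ ν, Feas x A c ν ∧ (Fr A ν).card ≤ m + 1 := by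
  obtain ⟨μ, hμ⟩ := h
  suffices H : ∀ N (μ : Fin n → ℝ), (Fr A μ).card ≤ N → Feas x A c μ →
      ∃ ν, Feas x A c ν ∧ (Fr A ν).card ≤ m + 1 from H (Fr A μ).card μ le_rfl hμ
  intro N
  induction N with
  | zero => exact fun μ hc hf => ⟨μ, hf, by omega⟩
  | succ N ih =>
    intro μ hc hf
    by_cases hle : (Fr A μ).card ≤ m + 1
    · exact ⟨μ, hf, hle⟩
    · obtain ⟨ν, hν, hlt⟩ := reduce_frac x A c μ hf (by omega)
      exact ih ν (by omega) hν

lemma exists_zero (x : Fin n → Fin m → ℝ) (A : Finset (Fin n)) (k : ℕ)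
    (hA : A.card = k + 1) (μ : Fin n → ℝ)
    (hf : Feas x A ((k : ℝ) - m) μ) (hfr : (Fr A μ).card ≤ m + 1) :
    ∃ i ∈ A, μ i = 0 := by
  classical
  obtain ⟨hbox, -, hsum⟩ := hf
  by_contra hcon
  push_neg at hcon
  have hpos : ∀ i ∈ A, 0 < μ i := fun i hi =>
    lt_of_le_of_ne (hbox i hi).1 (Ne.symm (hcon i hi))
  set O : Finset (Fin n) := A.filter (fun i => μ i = 1) with hO
  set F : Finset (Fin n) := A.filter (fun i => ¬ μ i = 1) with hFd
  have hFeq : F = Fr A μ := by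
    ext i
    simp only [hFd, Finset.mem_filter, mem_Fr]
    constructor
    · rintro ⟨hiA, hne⟩
      exact ⟨hiA, hpos i hiA, lt_of_le_of_ne (hbox i hiA).2 hne⟩
    · rintro ⟨hiA, -, hlt⟩
      exact ⟨hiA, ne_of_lt hlt⟩
  have hcard : O.card + F.card = k + 1 := by
    rw [hO, hFd, Finset.card_filter_add_card_filter_not, hA]
  have hsplit : ∑ i ∈ O, μ i + ∑ i ∈ F, μ i = (k : ℝ) - m := by
    rw [hO, hFd, Finset.sum_filter_add_sum_filter_not, hsum]
  have hOsum : ∑ i ∈ O, μ i = (O.card : ℝ) := by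
    rw [Finset.sum_congr rfl (fun i hi => (Finset.mem_filter.mp hi).2)]
    simp
    rfl
  have hFcard : F.card ≤ m + 1 := hFeq ▸ hfr
  have hs : ∑ i ∈ F, μ i = (F.card : ℝ) - (m + 1) := by
    have h1 : (O.card : ℝ) + F.card = (k : ℝ) + 1 := by exact_mod_cast hcard
    rw [hOsum] at hsplit
    linarith
  rcases Finset.eq_empty_or_nonempty F with hFe | hFne
  · rw [hFe] at hs
    simp at hs
    have : (0:ℝ) < (m:ℝ) + 1 := by positivity
    linarith [hs]
  · have hspos : 0 < ∑ i ∈ F, μ i :=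
      Finset.sum_pos (fun i hi => hpos i (Finset.filter_subset _ _ hi)) hFne
    have : (F.card : ℝ) ≤ (m : ℝ) + 1 := by exact_mod_cast hFcard
    linarith

lemma step (x : Fin n → Fin m → ℝ) (A : Finset (Fin n)) (k : ℕ) (hk : m ≤ k)
    (hA : A.card = k + 1) (h : ∃ μ, Feas x A ((k : ℝ) + 1 - m) μ) :
    ∃ B, B ⊆ A ∧ B.card = k ∧ ∃ μ, Feas x B ((k : ℝ) - m) μ := by
  classical
  obtain ⟨μ, hbox, hvec, hsum⟩ := h
  have hden : (0:ℝ) < (k : ℝ) + 1 - m := by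
    have : (m:ℝ) ≤ k := by exact_mod_cast hk
    linarith
  have hnum : (0:ℝ) ≤ (k : ℝ) - m := by
    have : (m:ℝ) ≤ k := by exact_mod_cast hk
    linarith
  set a : ℝ := ((k : ℝ) - m) / ((k : ℝ) + 1 - m) with ha
  have ha0 : 0 ≤ a := div_nonneg hnum hden.le
  have ha1 : a ≤ 1 := by
    rw [ha, div_le_one hden]; linarith
  have hfeas : Feas x A ((k : ℝ) - m) (fun i => a * μ i) := by
    refine ⟨fun i hi => ⟨mul_nonneg ha0 (hbox i hi).1, ?_⟩, ?_, ?_⟩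
    · calc a * μ i ≤ 1 * 1 := by
            exact mul_le_mul ha1 (hbox i hi).2 (hbox i hi).1 zero_le_one
        _ = 1 := one_mul 1
    · simp only [mul_smul, ← Finset.smul_sum, hvec, smul_zero]
    · rw [← Finset.mul_sum, hsum, ha, div_mul_cancel₀ _ (ne_of_gt hden)]
  obtain ⟨ν, hν, hfr⟩ := exists_basic x A ((k:ℝ) - m) ⟨_, hfeas⟩
  obtain ⟨i, hiA, hi0⟩ := exists_zero x A k hA ν hν hfr
  refine ⟨A.erase i, Finset.erase_subset _ _, by rw [Finset.card_erase_of_mem hiA, hA]; omega, ν, ?_, ?_, ?_⟩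
  · exact fun j hj => hν.1 j (Finset.mem_of_mem_erase hj)
  · rw [Finset.sum_erase _ (by rw [hi0, zero_smul])]
    exact hν.2.1
  · rw [Finset.sum_erase _ hi0]
    exact hν.2.2

end SteinitzChainAux

open SteinitzChainAux in
/-- The chain of index sets `A_m ⊆ A_{m+1} ⊆ ⋯ ⊆ A_n = {1,…,n}` from the LP-based proof of the
Steinitz lemma: `|A_k| = k`, and for each `k` there are coefficients `λ_i ∈ [0,1]`, `i ∈ A_k`,
with `∑_{i ∈ A_k} λ_i x_i = 0` and `∑_{i ∈ A_k} λ_i = k − m`. -/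
theorem steinitz_chain
    (m n : ℕ) (hm : 0 < m) (hmn : m ≤ n)
    (x : Fin n → Fin m → ℝ)
    (hx_sum : ∑ i, x i = 0) :
    ∃ S : ℕ → Finset (Fin n),
      S n = Finset.univ ∧
      (∀ k, m ≤ k → k < n → S k ⊆ S (k + 1)) ∧
      (∀ k, m ≤ k → k ≤ n → (S k).card = k) ∧
      (∀ k, m ≤ k → k ≤ n →
        ∃ lam : Fin n → ℝ,
          (∀ i ∈ S k, 0 ≤ lam i ∧ lam i ≤ 1) ∧
          (∑ i ∈ S k, lam i • x i) = 0 ∧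
          (∑ i ∈ S k, lam i) = (k : ℝ) - (m : ℝ)) := by
  classical
  suffices H : ∀ j, j ≤ n - m → ∃ S : ℕ → Finset (Fin n),
      S n = Finset.univ ∧
      (∀ k, n - j ≤ k → k < n → S k ⊆ S (k + 1)) ∧
      (∀ k, n - j ≤ k → k ≤ n → (S k).card = k) ∧
      (∀ k, n - j ≤ k → k ≤ n →
        ∃ lam : Fin n → ℝ,
          (∀ i ∈ S k, 0 ≤ lam i ∧ lam i ≤ 1) ∧
          (∑ i ∈ S k, lam i • x i) = 0 ∧
          (∑ i ∈ S k, lam i) = (k : ℝ) - (m : ℝ)) by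
    obtain ⟨S, h1, h2, h3, h4⟩ := H (n - m) le_rfl
    have hnm : n - (n - m) = m := by omega
    rw [hnm] at h2 h3 h4
    exact ⟨S, h1, h2, h3, h4⟩
  intro j
  induction j with
  | zero =>
    intro _
    refine ⟨fun _ => Finset.univ, rfl, ?_, ?_, ?_⟩
    · intro k hk hkn; omega
    · intro k hk hkn
      have : k = n := by omega
      simp [this]
    · intro k hk hkn
      have hke : k = n := by omega
      rw [hke]
      have hn0 : (0:ℝ) < (n:ℝ) := by
        have : 0 < n := by omega
        exact_mod_cast this
      have hmr : (m:ℝ) ≤ (n:ℝ) := by exact_mod_cast hmn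
      refine ⟨fun _ => ((n:ℝ) - m) / n, ?_, ?_, ?_⟩
      · intro i _
        constructor
        · exact div_nonneg (by linarith) hn0.le
        · rw [div_le_one hn0]; linarith
      · rw [← Finset.smul_sum, hx_sum, smul_zero]
      · rw [Finset.sum_const, Finset.card_univ, Fintype.card_fin, nsmul_eq_mul]
        field_simp
  | succ j ih =>
    intro hj
    obtain ⟨S, h1, h2, h3, h4⟩ := ih (by omega)
    set k₀ := n - (j + 1) with hk₀
    have hk₀m : m ≤ k₀ := by omega
    have hk₀lt : k₀ < n := by omega
    have hcard : (S (k₀ + 1)).card = k₀ + 1 := h3 (k₀ + 1) (by omega) (by omega)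
    obtain ⟨lam, hlb, hlv, hls⟩ := h4 (k₀ + 1) (by omega) (by omega)
    have hfeas : ∃ μ, Feas x (S (k₀ + 1)) ((k₀ : ℝ) + 1 - m) μ := by
      refine ⟨lam, hlb, hlv, ?_⟩
      rw [hls]; push_cast; ring
    obtain ⟨B, hBsub, hBcard, μ, hμ⟩ := step x (S (k₀ + 1)) k₀ hk₀m hcard hfeas
    refine ⟨fun k => if k ≤ k₀ then B else S k, ?_, ?_, ?_, ?_⟩
    · simp only [if_neg (show ¬ n ≤ k₀ by omega)]
      exact h1
    · intro k hk hkn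
      by_cases hkk : k ≤ k₀
      · have hke : k = k₀ := by omega
        simp only [if_pos hkk, if_neg (show ¬ k + 1 ≤ k₀ by omega)]
        rw [hke]
        exact hBsub
      · simp only [if_neg hkk, if_neg (show ¬ k + 1 ≤ k₀ by omega)]
        exact h2 k (by omega) hkn
    · intro k hk hkn
      by_cases hkk : k ≤ k₀
      · simp only [if_pos hkk]
        rw [hBcard]; omega
      · simp only [if_neg hkk]
        exact h3 k (by omega) hkn
    · intro k hk hkn
      by_cases hkk : k ≤ k₀
      · have hke : k = k₀ := by omega
        simp only [if_pos hkk]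
        obtain ⟨hb, hv, hs⟩ := hμ
        exact ⟨μ, hb, hv, by rw [hs, hke]⟩
      · simp only [if_neg hkk]
        exact h4 k (by omega) hkn
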